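/- arXiv:2007.07316 — 5 statements merged into one kernel-verified Lean document; each statement's English description precedes it below -/
import Mathlib

section
/- For real numbers a₁ ≥ a₂, b₁ ≥ b₂, and p ≥ 1, we have |a₁ - b₁|^p + |a₂ - b₂|^p ≤ |a₁ - b₂|^p + |a₂ - b₁|^p. -/
open Set

lemma convexOn_abs_rpow_aux {p : ℝ} (hp : 1 ≤ p) :
    ConvexOn ℝ Set.univ fun x : ℝ => |x| ^ p := by
  refine ⟨convex_univ, ?_⟩
  intro x _ y _ a b ha hb hab
  have h1 : |a • x + b • y| ^ p ≤ (a * |x| + b * |y|) ^ p := by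
    apply Real.rpow_le_rpow (abs_nonneg _)
    · calc |a • x + b • y| ≤ |a • x| + |b • y| := abs_add_le _ _
        _ = a * |x| + b * |y| := by
          simp [abs_mul, abs_of_nonneg ha, abs_of_nonneg hb]
    · linarith
  refine h1.trans ?_
  have := (convexOn_rpow hp).2 (mem_Ici.mpr (abs_nonneg x)) (mem_Ici.mpr (abs_nonneg y))
    ha hb hab
  simpa using this

theorem rearrangement_abs_rpow (a₁ a₂ b₁ b₂ p : ℝ)
    (ha : a₂ ≤ a₁) (hb : b₂ ≤ b₁) (hp : 1 ≤ p) :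
    |a₁ - b₁| ^ p + |a₂ - b₂| ^ p ≤ |a₁ - b₂| ^ p + |a₂ - b₁| ^ p := by
  set f : ℝ → ℝ := fun x => |x| ^ p with hf
  set x := a₁ - b₁
  set y := a₂ - b₂
  set u := a₂ - b₁
  set v := a₁ - b₂
  have hux : u ≤ x := by simp only [x, u]; linarith
  have hxv : x ≤ v := by simp only [x, v]; linarith
  have huy : u ≤ y := by simp only [y, u]; linarith
  have hsum : x + y = u + v := by simp only [x, y, u, v]; ring
  rcases eq_or_lt_of_le (hux.trans hxv) with heq | huv
  · have hxu : x = u := le_antisymm (by linarith) hux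
    have hyv : y = v := by linarith
    rw [hxu, hyv]; linarith
  · obtain ⟨t, ht⟩ : ∃ t : ℝ, t = (v - x) / (v - u) := ⟨_, rfl⟩
    have hvu : 0 < v - u := by linarith
    have ht0 : 0 ≤ t := ht ▸ div_nonneg (by linarith) hvu.le
    have ht1 : t ≤ 1 := ht ▸ (div_le_one hvu).mpr (by linarith)
    have hxeq : x = t * u + (1 - t) * v := by
      rw [ht]; field_simp [hvu.ne']; ring
    have hyeq : y = (1 - t) * u + t * v := by
      have : y = u + v - x := by linarith
      rw [this, hxeq]; ring
    have hcv := convexOn_abs_rpow_aux hp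
    have h1 : f x ≤ t * f u + (1 - t) * f v := by
      have := hcv.2 (mem_univ u) (mem_univ v) ht0 (sub_nonneg.mpr ht1) (by ring)
      simp only [smul_eq_mul] at this
      rw [hxeq]; exact this
    have h2 : f y ≤ (1 - t) * f u + t * f v := by
      have := hcv.2 (mem_univ u) (mem_univ v) (by linarith : (0:ℝ) ≤ 1 - t) ht0 (by ring)
      simp only [smul_eq_mul] at this
      rw [hyeq]; exact this
    have : f x + f y ≤ f u + f v := by
      calc f x + f y ≤ (t * f u + (1 - t) * f v) + ((1 - t) * f u + t * f v) := by linarith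
        _ = f u + f v := by ring
    simp only [f] at this
    linarith
end

section
/- Let p > 1 and let f(ỹ₁,...,ỹₙ) denote the minimizer of Σᵢ |ỹᵢ - y|^p over y ∈ ℝ. Then f is strictly increasing in each coordinate: if ỹᵢ' > ỹᵢ and all other reports are fixed, then f evaluated at the modified input is strictly larger. -/
open Real Filter

lemma aux_pos {p t : ℝ} (ht : 0 < t) : |t| ^ (p - 2) * t = t ^ (p - 1) := by
  rw [abs_of_pos ht, show p - 1 = (p - 2) + 1 by ring, Real.rpow_add_one ht.ne']

lemma aux_neg {p t : ℝ} (ht : t < 0) : |t| ^ (p - 2) * t = -((-t) ^ (p - 1)) := by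
  rw [abs_of_neg ht, show p - 1 = (p - 2) + 1 by ring,
    Real.rpow_add_one (by linarith : (-t) ≠ 0)]
  ring

lemma aux_strictMono {p : ℝ} (hp : 1 < p) :
    StrictMono (fun t : ℝ => |t| ^ (p - 2) * t) := by
  have hq : (0:ℝ) < p - 1 := by linarith
  intro a b hab
  show |a| ^ (p - 2) * a < |b| ^ (p - 2) * b
  rcases lt_trichotomy a 0 with ha | ha | ha <;> rcases lt_trichotomy b 0 with hb | hb | hb <;>
      try linarith
  · rw [aux_neg ha, aux_neg hb]
    have := Real.rpow_lt_rpow (by linarith : (0:ℝ) ≤ -b) (by linarith : -b < -a) hq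
    linarith
  · subst hb
    rw [aux_neg ha]
    have := Real.rpow_pos_of_pos (by linarith : (0:ℝ) < -a) (p - 1)
    simpa using by linarith
  · rw [aux_neg ha, aux_pos hb]
    have h1 := Real.rpow_pos_of_pos (by linarith : (0:ℝ) < -a) (p - 1)
    have h2 := Real.rpow_pos_of_pos hb (p - 1)
    linarith
  · subst ha
    rw [aux_pos hb]
    simpa using Real.rpow_pos_of_pos hb (p - 1)
  · rw [aux_pos ha, aux_pos hb]
    exact Real.rpow_lt_rpow ha.le hab hq

lemma aux_sum_eq_zero {p : ℝ} (hp : 1 < p) {n : ℕ} (v : Fin n → ℝ) (z : ℝ)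
    (hmin : ∀ w : ℝ, ∑ j, |v j - z| ^ p ≤ ∑ j, |v j - w| ^ p) :
    ∑ j, |v j - z| ^ (p - 2) * (v j - z) = 0 := by
  have hd : HasDerivAt (fun w : ℝ => ∑ j, |v j - w| ^ p)
      (∑ j, p * |v j - z| ^ (p - 2) * (v j - z) * (-1)) z := by
    apply HasDerivAt.fun_sum
    intro j _
    have h1 := hasDerivAt_abs_rpow (v j - z) hp
    have h2 : HasDerivAt (fun w : ℝ => v j - w) (-1) z := by
      simpa using (hasDerivAt_id z).const_sub (v j)
    exact h1.comp z h2
  have hloc : IsLocalMin (fun w : ℝ => ∑ j, |v j - w| ^ p) z :=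
    Filter.Eventually.of_forall hmin
  have h0 := hloc.hasDerivAt_eq_zero hd
  have h0' : (-p) * ∑ j, |v j - z| ^ (p - 2) * (v j - z) = 0 := by
    rw [Finset.mul_sum] at *
    rw [← h0]
    congr 1; ext j; ring
  rcases mul_eq_zero.mp h0' with hc | hc
  · exact absurd hc (by intro hc'; linarith [neg_eq_zero.mp hc'])
  · exact hc

theorem lp_minimizer_strictly_increasing (p : ℝ) (hp : 1 < p) (n : ℕ) (hn : 1 ≤ n)
    (yt : Fin n → ℝ) (i : Fin n) (y' : ℝ) (h : yt i < y') (z₁ z₂ : ℝ)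
    (h₁ : ∀ w : ℝ, ∑ j, |yt j - z₁| ^ p ≤ ∑ j, |yt j - w| ^ p)
    (h₂ : ∀ w : ℝ, ∑ j, |Function.update yt i y' j - z₂| ^ p
        ≤ ∑ j, |Function.update yt i y' j - w| ^ p) :
    z₁ < z₂ := by
  by_contra hcon
  push_neg at hcon
  set u := Function.update yt i y' with hu
  have S1 := aux_sum_eq_zero hp yt z₁ h₁
  have S2 := aux_sum_eq_zero hp u z₂ h₂
  have hmono := aux_strictMono hp
  have hlt : ∑ j, |yt j - z₁| ^ (p - 2) * (yt j - z₁)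
      < ∑ j, |u j - z₂| ^ (p - 2) * (u j - z₂) := by
    apply Finset.sum_lt_sum
    · intro j _
      apply (aux_strictMono hp).monotone
      have : yt j ≤ u j := by
        rcases eq_or_ne j i with rfl | hj
        · simp [hu, h.le]
        · simp [hu, Function.update_of_ne hj]
      linarith
    · refine ⟨i, Finset.mem_univ i, ?_⟩
      apply hmono
      have : u i = y' := by simp [hu]
      rw [this]
      linarith
  rw [S1, S2] at hlt
  exact lt_irrefl 0 hlt
end

section
/- Under the average rule f(ỹ₁,...,ỹₙ) = (1/n)Σᵢ ỹᵢ with reports in [0,1] and agents having single-peaked preferences with peaks yᵢ, a profile ỹ is a pure Nash equilibrium if and only if for each i: (f(ỹ) < yᵢ and ỹᵢ = 1), or (f(ỹ) > yᵢ and ỹᵢ = 0), or f(ỹ) = yᵢ. -/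
theorem average_rule_pne_characterization (n : ℕ) (hn : 1 ≤ n)
    (y yt : Fin n → ℝ)
    (hy : ∀ i, y i ∈ Set.Icc (0 : ℝ) 1)
    (hyt : ∀ i, yt i ∈ Set.Icc (0 : ℝ) 1) :
    (∀ i : Fin n, ∀ t ∈ Set.Icc (0 : ℝ) 1,
      ¬ (((∑ j, yt j) / n < (∑ j, Function.update yt i t j) / n ∧
            (∑ j, Function.update yt i t j) / n ≤ y i) ∨
         ((∑ j, Function.update yt i t j) / n < (∑ j, yt j) / n ∧
            y i ≤ (∑ j, Function.update yt i t j) / n)))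
    ↔
    (∀ i : Fin n,
      ((∑ j, yt j) / n < y i ∧ yt i = 1) ∨
      (y i < (∑ j, yt j) / n ∧ yt i = 0) ∨
      (∑ j, yt j) / n = y i) := by
  have hn0 : (0:ℝ) < n := by exact_mod_cast hn
  have hsum : ∀ (i : Fin n) (t : ℝ),
      (∑ j, Function.update yt i t j) = (∑ j, yt j) + (t - yt i) := by
    intro i t
    rw [Finset.sum_update_of_mem (Finset.mem_univ i),
        ← Finset.add_sum_erase _ yt (Finset.mem_univ i)]
    simp [Finset.sdiff_singleton_eq_erase]
    ring
  set S := ∑ j, yt j with hS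
  have hnS : (n:ℝ) * (S / n) = S := by field_simp
  constructor
  · intro hNE i
    rcases lt_trichotomy (S / n) (y i) with h | h | h
    · left
      refine ⟨h, ?_⟩
      by_contra h1
      have h1 : yt i < 1 := lt_of_le_of_ne (hyt i).2 h1
      set t := min 1 (yt i + n * (y i - S / n)) with ht
      have htpos : yt i < t := lt_min h1 (by nlinarith)
      have ht1 : t ≤ 1 := min_le_left _ _
      have ht0 : 0 ≤ t := le_min one_pos.le (by nlinarith [(hyt i).1])
      apply hNE i t ⟨ht0, ht1⟩
      left
      rw [hsum]
      constructor
      · rw [div_lt_div_iff_of_pos_right hn0]; linarith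
      · rw [div_le_iff₀ hn0]
        have h2 : t ≤ yt i + n * (y i - S / n) := min_le_right _ _
        nlinarith
    · right; right; exact h
    · right; left
      refine ⟨h, ?_⟩
      by_contra h1
      have h1 : 0 < yt i := lt_of_le_of_ne (hyt i).1 (Ne.symm h1)
      set t := max 0 (yt i - n * (S / n - y i)) with ht
      have htlt : t < yt i := max_lt h1 (by nlinarith)
      have ht0 : 0 ≤ t := le_max_left _ _
      have ht1 : t ≤ 1 := max_le one_pos.le (by nlinarith [(hyt i).2])
      apply hNE i t ⟨ht0, ht1⟩
      right
      rw [hsum]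
      constructor
      · rw [div_lt_div_iff_of_pos_right hn0]; linarith
      · rw [le_div_iff₀ hn0]
        have h2 : yt i - n * (S / n - y i) ≤ t := le_max_right _ _
        nlinarith
  · intro h i t ht hbad
    have hA : (S + (t - yt i)) / n = S / n + (t - yt i) / n := add_div _ _ _
    rcases hbad with ⟨h1, h2⟩ | ⟨h1, h2⟩ <;> rw [hsum, hA] at h1 h2 <;>
      rcases h i with ⟨hF, hv⟩ | ⟨hF, hv⟩ | hF
    · have : (t - yt i) / n ≤ 0 :=
        div_nonpos_iff.mpr (Or.inr ⟨by rw [hv]; linarith [ht.2], hn0.le⟩)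
      linarith
    · have : 0 ≤ (t - yt i) / n :=
        div_nonneg (by rw [hv]; linarith [ht.1]) hn0.le
      linarith
    · linarith
    · have : (t - yt i) / n ≤ 0 :=
        div_nonpos_iff.mpr (Or.inr ⟨by rw [hv]; linarith [ht.2], hn0.le⟩)
      linarith
    · have : 0 ≤ (t - yt i) / n :=
        div_nonneg (by rw [hv]; linarith [ht.1]) hn0.le
      linarith
    · linarith
end

section
/- Let p > 1 and suppose β* uniquely minimizes β ↦ |ỹ¹ - βᵀx|^p + Σ_{j≠i} |ỹⱼ - βᵀxⱼ|^p + R(β) over β ∈ ℝ^d, where R is differentiable and x ≠ 0. If the same β* also minimizes the loss with ỹ¹ replaced by ỹ² (all else equal), then ỹ¹ = ỹ². -/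
open Filter

lemma abs_rpow_deriv (p : ℝ) (hp : 1 < p) (c : ℝ) :
    HasDerivAt (fun u : ℝ => |u| ^ p) (p * |c| ^ (p - 2) * c) c := by
  rcases lt_trichotomy c 0 with hc | rfl | hc
  · have h1 : HasDerivAt (fun u : ℝ => -u) (-1) c := (hasDerivAt_id c).neg
    have h2 : HasDerivAt (fun v : ℝ => v ^ p) (p * (-c) ^ (p - 1)) (-c) :=
      Real.hasDerivAt_rpow_const (Or.inl (by linarith))
    have h3 := h2.comp c h1
    have heq : (fun u : ℝ => |u| ^ p) =ᶠ[nhds c] ((fun v : ℝ => v ^ p) ∘ fun u : ℝ => -u) := by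
      filter_upwards [eventually_lt_nhds hc] with u hu
      simp [Function.comp, abs_of_neg hu]
    have h4 := h3.congr_of_eventuallyEq heq
    refine h4.congr_deriv ?_
    rw [abs_of_neg hc, show p - 1 = p - 2 + 1 by ring,
      Real.rpow_add (by linarith : (0:ℝ) < -c), Real.rpow_one]
    ring
  · have h0 : p * |(0:ℝ)| ^ (p - 2) * 0 = 0 := by ring
    rw [h0, hasDerivAt_iff_tendsto_slope]
    have hzp : |(0:ℝ)| ^ p = 0 := by
      rw [abs_zero, Real.zero_rpow (by linarith : p ≠ 0)]
    have hbound : ∀ u : ℝ, ‖slope (fun u : ℝ => |u| ^ p) 0 u‖ ≤ |u| ^ (p - 1) := by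
      intro u
      rcases eq_or_ne u 0 with rfl | hu
      · simp [Real.zero_rpow (show p - 1 ≠ 0 by linarith)]
      · have hs : slope (fun u : ℝ => |u| ^ p) 0 u = |u| ^ p / u := by
          rw [slope_def_field, hzp]
          ring
        have e : |u| ^ (p - 1) * |u| = |u| ^ p := by
          rw [← Real.rpow_add_one (abs_ne_zero.mpr hu) (p - 1), show p - 1 + 1 = p by ring]
        rw [hs, Real.norm_eq_abs, abs_div,
          abs_of_nonneg (Real.rpow_nonneg (abs_nonneg u) p), ← e, mul_div_assoc,
          div_self (abs_ne_zero.mpr hu), mul_one]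
    have htend : Tendsto (fun u : ℝ => |u| ^ (p - 1)) (nhdsWithin 0 {(0:ℝ)}ᶜ) (nhds 0) := by
      have hcont : ContinuousAt (fun u : ℝ => |u| ^ (p - 1)) 0 := by
        have h1 : ContinuousAt (fun v : ℝ => v ^ (p - 1)) (|(0:ℝ)|) := by
          rw [abs_zero]
          exact Real.continuousAt_rpow_const 0 (p - 1) (Or.inr (by linarith))
        exact h1.comp continuous_abs.continuousAt
      have h0' : |(0:ℝ)| ^ (p - 1) = 0 := by
        rw [abs_zero, Real.zero_rpow (by linarith : p - 1 ≠ 0)]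
      have h2 := hcont.tendsto
      rw [h0'] at h2
      exact h2.mono_left nhdsWithin_le_nhds
    exact squeeze_zero_norm hbound htend
  · have h2 : HasDerivAt (fun v : ℝ => v ^ p) (p * c ^ (p - 1)) c :=
      Real.hasDerivAt_rpow_const (Or.inl (ne_of_gt hc))
    have heq : (fun u : ℝ => |u| ^ p) =ᶠ[nhds c] fun u : ℝ => u ^ p := by
      filter_upwards [eventually_gt_nhds hc] with u hu
      rw [abs_of_pos hu]
    have h4 := h2.congr_of_eventuallyEq heq
    refine h4.congr_deriv ?_
    rw [abs_of_pos hc, show p - 1 = p - 2 + 1 by ring, Real.rpow_add hc, Real.rpow_one]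
    ring

lemma abs_rpow_mul_injective (p : ℝ) (hp : 1 < p) {c1 c2 : ℝ}
    (h : |c1| ^ (p - 2) * c1 = |c2| ^ (p - 2) * c2) : c1 = c2 := by
  have hkey : ∀ c : ℝ, |(|c| ^ (p - 2) * c)| = |c| ^ (p - 1) := by
    intro c
    rcases eq_or_ne c 0 with rfl | hc
    · simp [Real.zero_rpow (show p - 1 ≠ 0 by linarith)]
    · rw [abs_mul, abs_of_nonneg (Real.rpow_nonneg (abs_nonneg c) _),
        show p - 1 = p - 2 + 1 by ring, Real.rpow_add (abs_pos.mpr hc), Real.rpow_one]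
  have habs : |c1| ^ (p - 1) = |c2| ^ (p - 1) := by
    rw [← hkey c1, ← hkey c2, h]
  have habseq : |c1| = |c2| := by
    rcases lt_trichotomy |c1| |c2| with hlt | he | hgt
    · exfalso
      have := Real.rpow_lt_rpow (abs_nonneg c1) hlt (by linarith : (0:ℝ) < p - 1)
      linarith
    · exact he
    · exfalso
      have := Real.rpow_lt_rpow (abs_nonneg c2) hgt (by linarith : (0:ℝ) < p - 1)
      linarith
  rcases eq_or_ne c1 0 with rfl | hc1
  · have h2 : |c2| = 0 := by rw [← habseq]; simp
    exact (abs_eq_zero.mp h2).symm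
  · have hpos : (0:ℝ) < |c1| ^ (p - 2) := Real.rpow_pos_of_pos (abs_pos.mpr hc1) _
    rw [← habseq] at h
    exact mul_left_cancel₀ (ne_of_gt hpos) h

theorem beta_cant_be_same (p : ℝ) (hp : 1 < p) (d n : ℕ) (i : Fin n)
    (x : Fin d → ℝ) (hx : x ≠ 0) (xs : Fin n → Fin d → ℝ)
    (yt : Fin n → ℝ) (yt1 yt2 : ℝ)
    (R : (Fin d → ℝ) → ℝ) (hRconv : ConvexOn ℝ Set.univ R)
    (hRdiff : Differentiable ℝ R)
    (βstar : Fin d → ℝ)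
    (h₁ : ∀ β : Fin d → ℝ, β ≠ βstar →
      |yt1 - ∑ j, βstar j * x j| ^ p
        + ∑ k ∈ Finset.univ.erase i, |yt k - ∑ j, βstar j * xs k j| ^ p + R βstar
      < |yt1 - ∑ j, β j * x j| ^ p
        + ∑ k ∈ Finset.univ.erase i, |yt k - ∑ j, β j * xs k j| ^ p + R β)
    (h₂ : ∀ β : Fin d → ℝ,
      |yt2 - ∑ j, βstar j * x j| ^ p
        + ∑ k ∈ Finset.univ.erase i, |yt k - ∑ j, βstar j * xs k j| ^ p + R βstar
      ≤ |yt2 - ∑ j, β j * x j| ^ p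
        + ∑ k ∈ Finset.univ.erase i, |yt k - ∑ j, β j * xs k j| ^ p + R β) :
    yt1 = yt2 := by
  obtain ⟨j₀, hj₀⟩ : ∃ j, x j ≠ 0 := by
    by_contra hc
    push_neg at hc
    exact hx (funext hc)
  set v : Fin d → ℝ := fun j => if j = j₀ then (x j₀)⁻¹ else 0 with hv
  set βf : ℝ → Fin d → ℝ := fun t j => βstar j + t * v j with hβf
  have hβf0 : βf 0 = βstar := by funext j; simp [hβf]
  have hvx : ∑ j, v j * x j = 1 := by
    simp only [hv, ite_mul, zero_mul, Finset.sum_ite_eq', Finset.mem_univ, if_true]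
    field_simp
  have hβne : ∀ t : ℝ, t ≠ 0 → βf t ≠ βstar := by
    intro t ht hc
    have h := congrFun hc j₀
    simp [hβf, hv, hj₀, ht] at h
  -- derivative of each residual term along the curve
  have hterm : ∀ (y : ℝ) (z : Fin d → ℝ),
      HasDerivAt (fun t : ℝ => |y - ∑ j, βf t j * z j| ^ p)
        (p * |y - ∑ j, βstar j * z j| ^ (p - 2) * (y - ∑ j, βstar j * z j)
          * (-(∑ j, v j * z j))) 0 := by
    intro y z
    have hin : HasDerivAt (fun t : ℝ => y - ∑ j, βf t j * z j) (-(∑ j, v j * z j)) 0 := by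
      have heq : (fun t : ℝ => y - ∑ j, βf t j * z j)
          = fun t : ℝ => (y - ∑ j, βstar j * z j) - (∑ j, v j * z j) * t := by
        funext t
        have h1 : ∀ j ∈ Finset.univ, βf t j * z j = βstar j * z j + t * (v j * z j) := by
          intro j _
          simp only [hβf]
          ring
        rw [Finset.sum_congr rfl h1, Finset.sum_add_distrib, ← Finset.mul_sum]
        ring
      rw [heq]
      simpa using ((hasDerivAt_id (0:ℝ)).const_mul (∑ j, v j * z j)).const_sub
        (y - ∑ j, βstar j * z j)
    have hout : HasDerivAt (fun u : ℝ => |u| ^ p)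
        (p * |y - ∑ j, βstar j * z j| ^ (p - 2) * (y - ∑ j, βstar j * z j))
        (y - ∑ j, βf 0 j * z j) := by
      rw [hβf0]
      exact abs_rpow_deriv p hp _
    exact hout.comp 0 hin
  have hS : HasDerivAt
      (fun t : ℝ => ∑ k ∈ Finset.univ.erase i, |yt k - ∑ j, βf t j * xs k j| ^ p)
      (∑ k ∈ Finset.univ.erase i,
        p * |yt k - ∑ j, βstar j * xs k j| ^ (p - 2) * (yt k - ∑ j, βstar j * xs k j)
          * (-(∑ j, v j * xs k j))) 0 :=
    HasDerivAt.fun_sum fun k _ => hterm (yt k) (xs k)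
  have hcurve : HasDerivAt (fun t : ℝ => βf t) v 0 := by
    have heq : (fun t : ℝ => βf t) = fun t : ℝ => βstar + t • v := by
      funext t j
      simp [hβf]
    rw [heq]
    simpa using ((hasDerivAt_id (0:ℝ)).smul_const v).const_add βstar
  have hRd : HasDerivAt (fun t : ℝ => R (βf t)) (fderiv ℝ R βstar v) 0 := by
    have h1 : HasFDerivAt R (fderiv ℝ R βstar) (βf 0) := by
      rw [hβf0]
      exact (hRdiff βstar).hasFDerivAt
    exact h1.comp_hasDerivAt 0 hcurve
  have hG : ∀ y : ℝ, HasDerivAt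
      (fun t : ℝ => |y - ∑ j, βf t j * x j| ^ p
        + ∑ k ∈ Finset.univ.erase i, |yt k - ∑ j, βf t j * xs k j| ^ p + R (βf t))
      (p * |y - ∑ j, βstar j * x j| ^ (p - 2) * (y - ∑ j, βstar j * x j) * (-(∑ j, v j * x j))
        + ∑ k ∈ Finset.univ.erase i,
            p * |yt k - ∑ j, βstar j * xs k j| ^ (p - 2) * (yt k - ∑ j, βstar j * xs k j)
              * (-(∑ j, v j * xs k j))
        + fderiv ℝ R βstar v) 0 :=
    fun y => ((hterm y x).add hS).add hRd
  have hmin1 : IsLocalMin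
      (fun t : ℝ => |yt1 - ∑ j, βf t j * x j| ^ p
        + ∑ k ∈ Finset.univ.erase i, |yt k - ∑ j, βf t j * xs k j| ^ p + R (βf t)) 0 := by
    apply Filter.Eventually.of_forall
    intro t
    simp only [hβf0]
    rcases eq_or_ne t 0 with rfl | ht
    · simp only [hβf0]
      exact le_refl _
    · exact le_of_lt (h₁ (βf t) (hβne t ht))
  have hmin2 : IsLocalMin
      (fun t : ℝ => |yt2 - ∑ j, βf t j * x j| ^ p
        + ∑ k ∈ Finset.univ.erase i, |yt k - ∑ j, βf t j * xs k j| ^ p + R (βf t)) 0 := by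
    apply Filter.Eventually.of_forall
    intro t
    simp only [hβf0]
    exact h₂ (βf t)
  have E1 := hmin1.hasDerivAt_eq_zero (hG yt1)
  have E2 := hmin2.hasDerivAt_eq_zero (hG yt2)
  rw [hvx] at E1 E2
  have hp0 : p ≠ 0 := by linarith
  have hmain : p * (|yt1 - ∑ j, βstar j * x j| ^ (p - 2) * (yt1 - ∑ j, βstar j * x j))
      = p * (|yt2 - ∑ j, βstar j * x j| ^ (p - 2) * (yt2 - ∑ j, βstar j * x j)) := by
    nlinarith [E1, E2]
  have := abs_rpow_mul_injective p hp (mul_left_cancel₀ hp0 hmain)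
  linarith
end

section
/- Let n points lie on the four x-positions 0, (1-ε)/2, (1+ε)/2, 1 (for 0 < ε < 1) with y-values 0, (1-ε)/2 + a, (1+ε)/2 - a, 1 for some a > 0, and let ȳ^{OLS} be the ordinary least squares fit. Then the residual at x = 0 equals aε/(1+ε²) and the residual at x = (1-ε)/2 equals a/(1+ε²). -/
set_option maxHeartbeats 1000000


theorem ols_residuals_four_points (ε a m c : ℝ)
    (hε : 0 < ε) (hε1 : ε < 1) (ha : 0 < a)
    (hmin : ∀ m' c' : ℝ,
      (0 - (m * 0 + c)) ^ 2
        + ((1 - ε) / 2 + a - (m * ((1 - ε) / 2) + c)) ^ 2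
        + ((1 + ε) / 2 - a - (m * ((1 + ε) / 2) + c)) ^ 2
        + (1 - (m * 1 + c)) ^ 2
      ≤ (0 - (m' * 0 + c')) ^ 2
        + ((1 - ε) / 2 + a - (m' * ((1 - ε) / 2) + c')) ^ 2
        + ((1 + ε) / 2 - a - (m' * ((1 + ε) / 2) + c')) ^ 2
        + (1 - (m' * 1 + c')) ^ 2) :
    |0 - (m * 0 + c)| = a * ε / (1 + ε ^ 2) ∧
    |(1 - ε) / 2 + a - (m * ((1 - ε) / 2) + c)| = a / (1 + ε ^ 2) := by
  have hD : (0:ℝ) < 1 + ε ^ 2 := by positivity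
  -- normal equation 1: sum of residuals is 0
  have hS : 2 - 2 * m - 4 * c = 0 := by
    have h := hmin m (c + (2 - 2 * m - 4 * c) / 4)
    have hid :
        ((0 - (m * 0 + (c + (2 - 2 * m - 4 * c) / 4))) ^ 2
          + ((1 - ε) / 2 + a - (m * ((1 - ε) / 2) + (c + (2 - 2 * m - 4 * c) / 4))) ^ 2
          + ((1 + ε) / 2 - a - (m * ((1 + ε) / 2) + (c + (2 - 2 * m - 4 * c) / 4))) ^ 2
          + (1 - (m * 1 + (c + (2 - 2 * m - 4 * c) / 4))) ^ 2)
        - ((0 - (m * 0 + c)) ^ 2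
          + ((1 - ε) / 2 + a - (m * ((1 - ε) / 2) + c)) ^ 2
          + ((1 + ε) / 2 - a - (m * ((1 + ε) / 2) + c)) ^ 2
          + (1 - (m * 1 + c)) ^ 2)
        = -(2 - 2 * m - 4 * c) ^ 2 / 4 := by ring
    have h2 : (2 - 2 * m - 4 * c) ^ 2 ≤ 0 := by linarith
    have := sq_nonneg (2 - 2 * m - 4 * c)
    have h3 : (2 - 2 * m - 4 * c) ^ 2 = 0 := le_antisymm h2 this
    exact pow_eq_zero_iff (two_ne_zero) |>.mp h3
  -- normal equation 2: sum of x_i * residual_i is 0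
  have hT : (1 + ε ^ 2) / 2 - a * ε + 1 - m * ((3 + ε ^ 2) / 2) - 2 * c = 0 := by
    set T := (1 + ε ^ 2) / 2 - a * ε + 1 - m * ((3 + ε ^ 2) / 2) - 2 * c with hTdef
    have h := hmin (m + T) c
    have hid :
        ((0 - ((m + T) * 0 + c)) ^ 2
          + ((1 - ε) / 2 + a - ((m + T) * ((1 - ε) / 2) + c)) ^ 2
          + ((1 + ε) / 2 - a - ((m + T) * ((1 + ε) / 2) + c)) ^ 2
          + (1 - ((m + T) * 1 + c)) ^ 2)
        - ((0 - (m * 0 + c)) ^ 2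
          + ((1 - ε) / 2 + a - (m * ((1 - ε) / 2) + c)) ^ 2
          + ((1 + ε) / 2 - a - (m * ((1 + ε) / 2) + c)) ^ 2
          + (1 - (m * 1 + c)) ^ 2)
        = T ^ 2 * ((ε ^ 2 - 1) / 2) := by
      rw [hTdef]; ring
    have h2 : 0 ≤ T ^ 2 * ((ε ^ 2 - 1) / 2) := by linarith
    have hsq := sq_nonneg T
    have he2 : (0:ℝ) < (1 - ε ^ 2) / 2 := by nlinarith
    have h3 : T ^ 2 = 0 := by
      by_contra hne
      have hpos : 0 < T ^ 2 := lt_of_le_of_ne hsq (Ne.symm hne)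
      nlinarith [mul_pos hpos he2]
    exact pow_eq_zero_iff (two_ne_zero) |>.mp h3
  have hm : m = 1 - 2 * a * ε / (1 + ε ^ 2) := by
    field_simp
    linear_combination (-2 : ℝ) * hT + hS
  have hc : c = a * ε / (1 + ε ^ 2) := by
    rw [hm] at hS
    linear_combination (-1/4 : ℝ) * hS
  constructor
  · have h0 : 0 - (m * 0 + c) = -(a * ε / (1 + ε ^ 2)) := by rw [hc]; ring
    rw [h0, abs_neg, abs_of_pos (by positivity)]
  · have h1 : (1 - ε) / 2 + a - (m * ((1 - ε) / 2) + c) = a / (1 + ε ^ 2) := by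
      rw [hm, hc]; field_simp; ring
    rw [h1, abs_of_pos (by positivity)]
end
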